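/- The barycentric coordinate map is smooth jointly in the point and the basis: the map F × A → ℝ^{d+1} sending (q, p₀,...,p_d) to the barycentric coordinates of q with respect to the affine basis (p₀,...,p_d) is infinitely differentiable, where A ⊆ F^{d+1} is the (open) set of affine bases of F. -/

import Mathlib

open scoped ContDiff

open Matrix

private theorem contDiffOn_finset_prod' {E : Type*} [NormedAddCommGroup E] [NormedSpace ℝ E]
    {ι : Type*} (s : Finset ι) (f : ι → E → ℝ) {t : Set E}
    (h : ∀ i ∈ s, ContDiffOn ℝ ∞ (f i) t) :
    ContDiffOn ℝ ∞ (fun x => ∏ i ∈ s, f i x) t := by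
  classical
  induction s using Finset.induction_on with
  | empty => simpa using contDiffOn_const
  | @insert a s hi ih =>
    simp only [Finset.prod_insert hi]
    exact (h a (Finset.mem_insert_self a s)).mul
      (ih fun i his => h i (Finset.mem_insert_of_mem his))

private theorem contDiffOn_det' {E : Type*} [NormedAddCommGroup E] [NormedSpace ℝ E]
    {m : ℕ} {f : E → Matrix (Fin m) (Fin m) ℝ} {s : Set E}
    (h : ∀ i j, ContDiffOn ℝ ∞ (fun x => f x i j) s) :
    ContDiffOn ℝ ∞ (fun x => (f x).det) s := by
  simp_rw [Matrix.det_apply']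
  exact ContDiffOn.sum fun σ _ => contDiffOn_const.mul
    (contDiffOn_finset_prod' _ _ fun i _ => h (σ i) i)

/-- The barycentric coordinates are smooth jointly in the point and the basis:
any function `w` assigning to `(q, p)`, where `p` is a tuple forming an affine
basis, the barycentric coordinates of `q` with respect to `p`, is `C^∞` on the
set of pairs `(q, p)` with `p` an affine basis. -/
theorem smooth_barycentric_coords {F : Type*} [NormedAddCommGroup F] [NormedSpace ℝ F]
    [FiniteDimensional ℝ F]
    (A : Set (F × (Fin (Module.finrank ℝ F + 1) → F)))
    (hA : A = {qp | AffineIndependent ℝ qp.2 ∧ affineSpan ℝ (Set.range qp.2) = ⊤})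
    (w : F × (Fin (Module.finrank ℝ F + 1) → F) → Fin (Module.finrank ℝ F + 1) → ℝ)
    (hw : ∀ qp ∈ A, (∑ i, w qp i = 1) ∧ ∑ i, w qp i • qp.2 i = qp.1) :
    ContDiffOn ℝ ∞ w A := by
  classical
  have hn : Module.finrank ℝ F + 1 = Module.finrank ℝ F + 1 := rfl
  obtain ⟨b⟩ : Nonempty (AffineBasis (Fin (Module.finrank ℝ F + 1)) ℝ F) :=
    AffineBasis.exists_affineBasis_of_finiteDimensional (by simp)
  -- the matrix of a tuple relative to the background basis `b`
  set M : F × (Fin (Module.finrank ℝ F + 1) → F) → Matrix (Fin (Module.finrank ℝ F + 1)) (Fin (Module.finrank ℝ F + 1)) ℝ :=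
    fun qp => Matrix.of fun i j => b.coord j (qp.2 i) with hM
  set v : F × (Fin (Module.finrank ℝ F + 1) → F) → Fin (Module.finrank ℝ F + 1) → ℝ := fun qp j => b.coord j qp.1 with hv
  -- the candidate smooth formula
  set g : F × (Fin (Module.finrank ℝ F + 1) → F) → Fin (Module.finrank ℝ F + 1) → ℝ :=
    fun qp i => (M qp).det⁻¹ * (M qp)ᵀ.cramer (v qp) i with hg
  -- for `qp ∈ A`, build the affine basis and identify `M qp` with `b.toMatrix`
  have hbasis : ∀ qp ∈ A, ∃ b₂ : AffineBasis (Fin (Module.finrank ℝ F + 1)) ℝ F, ⇑b₂ = qp.2 := by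
    intro qp hqp
    rw [hA] at hqp
    exact ⟨⟨qp.2, hqp.1, hqp.2⟩, rfl⟩
  have hMdet : ∀ qp ∈ A, (M qp).det ≠ 0 := by
    intro qp hqp
    obtain ⟨b₂, hb₂⟩ := hbasis qp hqp
    have hu := b.isUnit_toMatrix b₂
    rw [Matrix.isUnit_iff_isUnit_det, isUnit_iff_ne_zero] at hu
    have : M qp = b.toMatrix ⇑b₂ := by
      ext i j
      simp [hM, AffineBasis.toMatrix_apply, hb₂]
    rwa [this]
  -- `w` agrees with `g` on `A`
  have hwg : Set.EqOn w g A := by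
    intro qp hqp
    obtain ⟨b₂, hb₂⟩ := hbasis qp hqp
    obtain ⟨h1, h2⟩ := hw qp hqp
    have hMt : M qp = b.toMatrix ⇑b₂ := by
      ext i j
      simp [hM, AffineBasis.toMatrix_apply, hb₂]
    have hcomb : Finset.univ.affineCombination ℝ qp.2 (w qp) = qp.1 := by
      rw [Finset.univ.affineCombination_eq_linear_combination _ _ h1, h2]
    have hwcoords : w qp = b₂.coords qp.1 := by
      funext i
      have := b₂.coord_apply_combination_of_mem (Finset.mem_univ i) (w := w qp) (by simpa using h1)
      rw [AffineBasis.coords]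
      simp only [hb₂] at this ⊢
      rw [hcomb] at this
      exact this.symm
    have hcramer := b.det_smul_coords_eq_cramer_coords b₂ qp.1
    have hvv : v qp = b.coords qp.1 := by funext j; simp [hv, AffineBasis.coords]
    have hdet := hMdet qp hqp
    rw [hMt] at hdet
    funext i
    have := congrFun hcramer i
    simp only [Pi.smul_apply, smul_eq_mul] at this
    rw [hwcoords, hg]
    simp only [hMt, hvv]
    field_simp
    rw [mul_comm]
    exact this
  refine ContDiffOn.congr ?_ hwg
  -- smoothness of the matrix entries
  have hentry : ∀ i j, ContDiffOn ℝ ∞ (fun qp => M qp i j)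
      (A : Set (F × (Fin (Module.finrank ℝ F + 1) → F))) := by
    intro i j
    have h1 : ContDiff ℝ ∞ (b.coord j) := (smooth_barycentric_coord b j).of_le le_top
    have h2 : ContDiff ℝ ∞ (fun qp : F × (Fin (Module.finrank ℝ F + 1) → F) => qp.2 i) :=
      (contDiff_pi.1 contDiff_snd) i
    exact (h1.comp h2).contDiffOn
  have hventry : ∀ j, ContDiffOn ℝ ∞ (fun qp => v qp j)
      (A : Set (F × (Fin (Module.finrank ℝ F + 1) → F))) := by
    intro j
    have h1 : ContDiff ℝ ∞ (b.coord j) := (smooth_barycentric_coord b j).of_le le_top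
    exact (h1.comp contDiff_fst).contDiffOn
  rw [contDiffOn_pi]
  intro i
  refine ContDiffOn.mul (ContDiffOn.inv (contDiffOn_det' hentry) hMdet) ?_
  -- the cramer entry is a determinant of a matrix with smooth entries
  have : (fun qp => (M qp)ᵀ.cramer (v qp) i)
      = fun qp => ((M qp)ᵀ.updateCol i (v qp)).det := by
    funext qp; rw [Matrix.cramer_apply]
  rw [this]
  refine contDiffOn_det' fun j k => ?_
  simp only [Matrix.updateCol_apply, Matrix.transpose_apply]
  by_cases hki : k = i
  · simpa [hki] using hventry j
  · simpa [hki] using hentry k j
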